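/- Let T be a bounded linear operator on a complex Hilbert space H and N a self-adjoint norm on B(H) (N(T) = N(T*)). Then dw_N(T) ≥ (1/2) sqrt( (3/2) w_N(T)² + 2 N(|T|)⁴ + (d₁ + d₂) + 2|m₁ − m₂| ), with m₁ = max{N(Re T)² + N(|T|)⁴, w_N(T)²}, m₂ = max{N(Im T)², N(|T|)⁴}, d₁ = |N(Re T)² + N(|T|)⁴ − w_N(T)²|, d₂ = |N(Im T)² − N(|T|)⁴|. -/

import Mathlib

open ContinuousLinearMap Complex

variable {H : Type*} [NormedAddCommGroup H] [InnerProductSpace ℂ H] [CompleteSpace H]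

/-- Real part of an operator: `Re(A) = (A + A*)/2`. -/
noncomputable def reOp (A : H →L[ℂ] H) : H →L[ℂ] H := (2 : ℂ)⁻¹ • (A + adjoint A)

/-- Imaginary part of an operator: `Im(A) = (A - A*)/(2i)`. -/
noncomputable def imOp (A : H →L[ℂ] H) : H →L[ℂ] H := (2 * I)⁻¹ • (A - adjoint A)

/-- Modulus of an operator: `|A| = (A* A)^{1/2}`. -/
noncomputable def absOp (A : H →L[ℂ] H) : H →L[ℂ] H := CFC.sqrt (adjoint A * A)

/-- Generalized numerical radius. -/
noncomputable def wN (N : (H →L[ℂ] H) → ℝ) (T : H →L[ℂ] H) : ℝ :=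
  ⨆ θ : ℝ, N (reOp (Complex.exp (θ * I) • T))

/-- Generalized Davis–Wielandt radius. -/
noncomputable def dwN (N : (H →L[ℂ] H) → ℝ) (T : H →L[ℂ] H) : ℝ :=
  ⨆ θ : ℝ, Real.sqrt ((N (reOp (Complex.exp (θ * I) • T))) ^ 2
    + (N (reOp (Complex.exp (θ * I) • absOp T))) ^ 4)

set_option synthInstance.maxHeartbeats 1000000 in
lemma absOp_sa (T : H →L[ℂ] H) : IsSelfAdjoint (absOp T) :=
  IsSelfAdjoint.of_nonneg (CFC.sqrt_nonneg _)

lemma adjoint_smul' (z : ℂ) (T : H →L[ℂ] H) : adjoint (z • T) = (starRingEnd ℂ z) • adjoint T := by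
  rw [← star_eq_adjoint, ← star_eq_adjoint, star_smul]; rfl

lemma exp_theta (θ : ℝ) : Complex.exp (θ*I) = (Real.cos θ : ℂ) + (Real.sin θ : ℂ)*I := by
  rw [Complex.exp_mul_I]; push_cast; ring

lemma conj_exp_theta (θ : ℝ) : (starRingEnd ℂ) (Complex.exp (θ*I)) = (Real.cos θ : ℂ) - (Real.sin θ : ℂ)*I := by
  have : (starRingEnd ℂ) ((θ:ℂ)*I) = ((-θ : ℝ):ℂ) * I := by
    rw [map_mul, Complex.conj_I, Complex.conj_ofReal]; push_cast; ring
  rw [← Complex.exp_conj, this, exp_theta]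
  push_cast; simp [Real.cos_neg, Real.sin_neg]; ring

lemma reOp_exp_smul (θ : ℝ) (T : H →L[ℂ] H) :
    reOp (Complex.exp (θ*I) • T)
      = (Real.cos θ : ℂ) • reOp T + (-(Real.sin θ) : ℂ) • imOp T := by
  rw [reOp, reOp, imOp, adjoint_smul', conj_exp_theta, exp_theta]
  match_scalars
  all_goals field_simp
  all_goals ring_nf
  all_goals simp [Complex.I_sq]
  all_goals ring

lemma reOp_exp_smul_sa (θ : ℝ) {S : H →L[ℂ] H} (hS : IsSelfAdjoint S) :
    reOp (Complex.exp (θ*I) • S) = ((Real.cos θ : ℂ)) • S := by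
  rw [reOp, adjoint_smul', conj_exp_theta, exp_theta, hS.adjoint_eq]
  match_scalars
  all_goals field_simp
  all_goals ring

set_option maxHeartbeats 2000000 in
theorem stmt_14 (N : (H →L[ℂ] H) → ℝ) (T : H →L[ℂ] H)
    (hN0 : ∀ A : H →L[ℂ] H, 0 ≤ N A)
    (hNeq : ∀ A : H →L[ℂ] H, N A = 0 → A = 0)
    (hNadd : ∀ A B : H →L[ℂ] H, N (A + B) ≤ N A + N B)
    (hNsmul : ∀ (c : ℂ) (A : H →L[ℂ] H), N (c • A) = ‖c‖ * N A)
    (hNsa : ∀ A : H →L[ℂ] H, N (adjoint A) = N A)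
    (m₁ m₂ d₁ d₂ : ℝ)
    (hm₁ : m₁ = max ((N (reOp T)) ^ 2 + (N (absOp T)) ^ 4) ((wN N T) ^ 2))
    (hm₂ : m₂ = max ((N (imOp T)) ^ 2) ((N (absOp T)) ^ 4))
    (hd₁ : d₁ = |(N (reOp T)) ^ 2 + (N (absOp T)) ^ 4 - (wN N T) ^ 2|)
    (hd₂ : d₂ = |(N (imOp T)) ^ 2 - (N (absOp T)) ^ 4|) :
    dwN N T ≥ (1 / 2) * Real.sqrt ((3 / 2) * (wN N T) ^ 2 + 2 * (N (absOp T)) ^ 4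
      + (d₁ + d₂) + 2 * |m₁ - m₂|) := by
  set f : ℝ → ℝ := fun θ => N (reOp (Complex.exp (θ * I) • T)) with hf
  set g : ℝ → ℝ := fun θ => Real.sqrt ((f θ) ^ 2
    + (N (reOp (Complex.exp (θ * I) • absOp T))) ^ 4) with hg
  have habs : ∀ θ : ℝ, N (reOp (Complex.exp (θ * I) • absOp T))
      = |Real.cos θ| * N (absOp T) := by
    intro θ
    rw [reOp_exp_smul_sa θ (absOp_sa T), hNsmul, Complex.norm_real, Real.norm_eq_abs]
  have hfle : ∀ θ : ℝ, f θ ≤ |Real.cos θ| * N (reOp T) + |Real.sin θ| * N (imOp T) := by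
    intro θ
    rw [hf]; simp only
    rw [reOp_exp_smul]
    refine (hNadd _ _).trans ?_
    rw [hNsmul, hNsmul, norm_neg, Complex.norm_real, Complex.norm_real, Real.norm_eq_abs,
      Real.norm_eq_abs]
  have hfle2 : ∀ θ : ℝ, f θ ≤ N (reOp T) + N (imOp T) := by
    intro θ
    refine (hfle θ).trans ?_
    have h1 := Real.abs_cos_le_one θ
    have h2 := Real.abs_sin_le_one θ
    have := hN0 (reOp T); have := hN0 (imOp T)
    nlinarith [abs_nonneg (Real.cos θ), abs_nonneg (Real.sin θ)]
  have hf0 : ∀ θ, 0 ≤ f θ := fun θ => hN0 _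
  have bddf : BddAbove (Set.range f) := ⟨N (reOp T) + N (imOp T), by
    rintro _ ⟨θ, rfl⟩; exact hfle2 θ⟩
  have hgle : ∀ θ : ℝ, g θ ≤ Real.sqrt ((N (reOp T) + N (imOp T)) ^ 2 + (N (absOp T)) ^ 4) := by
    intro θ
    apply Real.sqrt_le_sqrt
    have h1 : (f θ)^2 ≤ (N (reOp T) + N (imOp T))^2 := by
      have := hf0 θ; nlinarith [hfle2 θ]
    have h2 : (N (reOp (Complex.exp (θ * I) • absOp T)))^4 ≤ (N (absOp T))^4 := by
      rw [habs θ]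
      have h1 := Real.abs_cos_le_one θ
      have h0 := abs_nonneg (Real.cos θ)
      rw [mul_pow]
      exact mul_le_of_le_one_left (pow_nonneg (hN0 (absOp T)) 4) (pow_le_one₀ h0 h1)
    linarith
  have bddg : BddAbove (Set.range g) := ⟨_, by rintro _ ⟨θ, rfl⟩; exact hgle θ⟩
  have hwN : wN N T = ⨆ θ, f θ := rfl
  have hdwN : dwN N T = ⨆ θ, g θ := rfl
  have hfw : ∀ θ, f θ ≤ wN N T := fun θ => hwN ▸ le_ciSup bddf θ
  have hgD : ∀ θ, g θ ≤ dwN N T := fun θ => hdwN ▸ le_ciSup bddg θ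
  have hw0 : 0 ≤ wN N T := (hf0 0).trans (hfw 0)
  have hD0 : 0 ≤ dwN N T := (Real.sqrt_nonneg _).trans (hgD 0)
  have hwD : wN N T ≤ dwN N T := by
    rw [hwN]
    apply ciSup_le
    intro θ
    refine le_trans ?_ (hgD θ)
    rw [hg]; simp only
    calc f θ = Real.sqrt ((f θ)^2) := (Real.sqrt_sq (hf0 θ)).symm
    _ ≤ _ := Real.sqrt_le_sqrt (by nlinarith [pow_nonneg (hN0 (reOp (Complex.exp (θ * I) • absOp T))) 4])
  -- θ = 0 : a ≤ D²
  have hfzero : f 0 = N (reOp T) := by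
    rw [hf]; norm_num
  have hg0 : Real.sqrt ((N (reOp T))^2 + (N (absOp T))^4) ≤ dwN N T := by
    have h := hgD 0
    rw [hg] at h; simp only at h
    rw [habs 0, hfzero] at h
    norm_num at h
    exact h
  have ha : (N (reOp T))^2 + (N (absOp T))^4 ≤ (dwN N T)^2 := by
    have h2 : ((N (reOp T))^2 + (N (absOp T))^4) = (Real.sqrt ((N (reOp T))^2 + (N (absOp T))^4))^2 :=
      (Real.sq_sqrt (by positivity)).symm
    rw [h2]
    exact pow_le_pow_left₀ (Real.sqrt_nonneg _) hg0 2
  -- θ = -π/2 : b ≤ D²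
  have hb : (N (imOp T))^2 ≤ (dwN N T)^2 := by
    have hB : N (imOp T) ≤ dwN N T := by
      have h := hgD (-(Real.pi/2))
      rw [hg] at h; simp only at h
      rw [habs] at h
      have hcos : Real.cos (-(Real.pi/2)) = 0 := by simp
      have hsin : Real.sin (-(Real.pi/2)) = -1 := by simp
      have hfval : f (-(Real.pi/2)) = N (imOp T) := by
        rw [hf]; simp only
        rw [reOp_exp_smul, hcos, hsin]
        norm_num
      rw [hfval, hcos] at h
      simp only [abs_zero, zero_mul] at h
      calc N (imOp T) = Real.sqrt ((N (imOp T))^2) := (Real.sqrt_sq (hN0 _)).symm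
      _ ≤ dwN N T := by
        refine le_trans (le_of_eq ?_) h
        norm_num
    exact pow_le_pow_left₀ (hN0 _) hB 2
  have hwsq : (wN N T)^2 ≤ (dwN N T)^2 := pow_le_pow_left₀ hw0 hwD 2
  -- F4 : w² ≤ A² + B²
  have hF4 : (wN N T)^2 ≤ (N (reOp T))^2 + (N (imOp T))^2 := by
    have hws : wN N T ≤ Real.sqrt ((N (reOp T))^2 + (N (imOp T))^2) := by
      rw [hwN]
      apply ciSup_le
      intro θ
      refine (hfle θ).trans ?_
      have hnn : 0 ≤ |Real.cos θ| * N (reOp T) + |Real.sin θ| * N (imOp T) := by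
        have := hN0 (reOp T); have := hN0 (imOp T)
        positivity
      have hsq : (|Real.cos θ| * N (reOp T) + |Real.sin θ| * N (imOp T))^2
          ≤ (N (reOp T))^2 + (N (imOp T))^2 := by
        have hpyth := Real.sin_sq_add_cos_sq θ
        have h1 : |Real.cos θ|^2 = Real.cos θ ^ 2 := sq_abs _
        have h2 : |Real.sin θ|^2 = Real.sin θ ^ 2 := sq_abs _
        nlinarith [sq_nonneg (|Real.sin θ| * N (reOp T) - |Real.cos θ| * N (imOp T))]
      calc _ = Real.sqrt ((|Real.cos θ| * N (reOp T) + |Real.sin θ| * N (imOp T))^2) :=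
            (Real.sqrt_sq hnn).symm
      _ ≤ _ := Real.sqrt_le_sqrt hsq
    calc (wN N T)^2 ≤ (Real.sqrt ((N (reOp T))^2 + (N (imOp T))^2))^2 :=
          pow_le_pow_left₀ hw0 hws 2
    _ = _ := Real.sq_sqrt (by positivity)
  have hc : (N (absOp T))^4 ≤ (dwN N T)^2 := by nlinarith [sq_nonneg (N (reOp T))]
  have hkey : (3 / 2) * (wN N T) ^ 2 + 2 * (N (absOp T)) ^ 4 + (d₁ + d₂) + 2 * |m₁ - m₂|
      ≤ (2 * dwN N T)^2 := by
    subst hm₁ hm₂ hd₁ hd₂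
    have hB2 : (0:ℝ) ≤ (N (imOp T))^2 := sq_nonneg _
    have hA2 : (0:ℝ) ≤ (N (reOp T))^2 := sq_nonneg _
    rcases abs_cases (max ((N (reOp T)) ^ 2 + (N (absOp T)) ^ 4) ((wN N T) ^ 2)
        - max ((N (imOp T)) ^ 2) ((N (absOp T)) ^ 4)) with ⟨e3,_⟩|⟨e3,_⟩ <;>
      rw [e3] <;>
      rcases le_total ((N (reOp T)) ^ 2 + (N (absOp T)) ^ 4) ((wN N T) ^ 2) with h1|h1 <;>
      rcases le_total ((N (imOp T)) ^ 2) ((N (absOp T)) ^ 4) with h2|h2 <;>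
      (first
        | (rw [max_eq_right h1, max_eq_right h2])
        | (rw [max_eq_right h1, max_eq_left h2])
        | (rw [max_eq_left h1, max_eq_right h2])
        | (rw [max_eq_left h1, max_eq_left h2])) <;>
      rcases abs_cases ((N (reOp T)) ^ 2 + (N (absOp T)) ^ 4 - (wN N T) ^ 2) with ⟨e1,_⟩|⟨e1,_⟩ <;>
      rcases abs_cases ((N (imOp T)) ^ 2 - (N (absOp T)) ^ 4) with ⟨e2,_⟩|⟨e2,_⟩ <;>
      rw [e1, e2] <;>
      linarith [ha, hb, hc, hwsq, hF4, sq_nonneg (N (imOp T)), sq_nonneg (N (reOp T))]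
  have hfin : Real.sqrt ((3 / 2) * (wN N T) ^ 2 + 2 * (N (absOp T)) ^ 4 + (d₁ + d₂) + 2 * |m₁ - m₂|)
      ≤ 2 * dwN N T := by
    calc _ ≤ Real.sqrt ((2 * dwN N T)^2) := Real.sqrt_le_sqrt hkey
    _ = 2 * dwN N T := Real.sqrt_sq (by linarith)
  linarith
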